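/- Let C be a d-uniform clutter, d ≥ 3, whose vertex set admits a partition into d minimal vertex covers X_i = {x_{2i-1}, x_{2i}} of size 2. If C satisfies the König property and C has a minimal vertex cover of size d, then the incidence matrix A of C has rank exactly d+1. -/

import Mathlib

open Finset

/-- A clutter on vertex set `Fin n`: a family of nonempty edges, none contained in another. -/
structure Clutter (n : ℕ) where
  edges : Finset (Finset (Fin n))
  nonempty_edges : ∀ e ∈ edges, e.Nonempty
  antichain : ∀ e ∈ edges, ∀ f ∈ edges, e ⊆ f → e = f

namespace Clutter

variable {n : ℕ}

/-- `C` is `d`-uniform: every edge has exactly `d` vertices. -/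
def Uniform (C : Clutter n) (d : ℕ) : Prop := ∀ e ∈ C.edges, e.card = d

/-- `S` is a vertex cover of `C`. -/
def IsCover (C : Clutter n) (S : Finset (Fin n)) : Prop := ∀ e ∈ C.edges, (e ∩ S).Nonempty

/-- `S` is a minimal vertex cover of `C`. -/
def IsMinCover (C : Clutter n) (S : Finset (Fin n)) : Prop :=
  C.IsCover S ∧ ∀ T ⊆ S, C.IsCover T → T = S

/-- The vertex covering number `α₀(C)`. -/
noncomputable def coverNumber (C : Clutter n) : ℕ :=
  sInf {k | ∃ S : Finset (Fin n), C.IsCover S ∧ S.card = k}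

/-- The edge independence (matching) number `β₁(C)`. -/
noncomputable def matchNumber (C : Clutter n) : ℕ :=
  sSup {k | ∃ M : Finset (Finset (Fin n)), M ⊆ C.edges ∧
    (∀ e ∈ M, ∀ f ∈ M, e ≠ f → Disjoint e f) ∧ M.card = k}

/-- `C` has a perfect matching: pairwise disjoint edges covering all vertices. -/
def HasPerfectMatching (C : Clutter n) : Prop :=
  ∃ M : Finset (Finset (Fin n)), M ⊆ C.edges ∧
    (∀ e ∈ M, ∀ f ∈ M, e ≠ f → Disjoint e f) ∧ (∀ i : Fin n, ∃ e ∈ M, i ∈ e)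

/-- The set covering polyhedron `Q(A) = {x : x ≥ 0, xA ≥ 1}`. -/
def QA (C : Clutter n) : Set (Fin n → ℝ) :=
  {x | (∀ i, 0 ≤ x i) ∧ ∀ e ∈ C.edges, 1 ≤ ∑ i ∈ e, x i}

/-- `Q(A)` is an integral polyhedron: all its vertices (extreme points) are integral. -/
def QAIntegral (C : Clutter n) : Prop :=
  ∀ x ∈ Set.extremePoints ℝ C.QA, ∀ i, ∃ z : ℤ, x i = (z : ℝ)

/-- Deletion of a vertex: remove `v` and all edges through it. -/
def delete (C : Clutter n) (v : Fin n) : Clutter n where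
  edges := C.edges.filter (fun e => v ∉ e)
  nonempty_edges := fun e he => C.nonempty_edges e (mem_filter.mp he).1
  antichain := fun e he f hf hef =>
    C.antichain e (mem_filter.mp he).1 f (mem_filter.mp hf).1 hef

/-- The edges of the minor of `C` obtained by deleting the vertices in `D`
(setting them to `0`) and contracting the vertices in `U` (setting them to `1`):
the minimal nonempty sets of the form `e \ U` with `e` an edge disjoint from `D`. -/
def minorEdges (C : Clutter n) (D U : Finset (Fin n)) : Finset (Finset (Fin n)) :=
  ((C.edges.filter (fun e => Disjoint e D)).image (fun e => e \ U)).filter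
    (fun e => e.Nonempty ∧
      ∀ f ∈ (C.edges.filter (fun e => Disjoint e D)).image (fun e => e \ U),
        f.Nonempty → f ⊆ e → f = e)

/-- The minor of `C` determined by deleting `D` and contracting `U`. -/
def minor (C : Clutter n) (D U : Finset (Fin n)) : Clutter n where
  edges := C.minorEdges D U
  nonempty_edges := fun e he => ((mem_filter.mp he).2).1
  antichain := fun e he f hf hef =>
    ((mem_filter.mp hf).2).2 e (mem_filter.mp he).1 ((mem_filter.mp he).2).1 hef

/-- The König property: `α₀(C) = β₁(C)`. -/
def HasKonig (C : Clutter n) : Prop := C.coverNumber = C.matchNumber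

/-- The packing property: every (proper) minor of `C` has the König property. -/
def PackingProperty (C : Clutter n) : Prop :=
  ∀ D U : Finset (Fin n), Disjoint D U →
    (∀ e ∈ C.edges, Disjoint e D → ¬ e ⊆ U) → (C.minor D U).HasKonig

/-- The max-flow min-cut property: for every nonnegative integral `α` the LP
`min{⟨α,x⟩ : x ≥ 0, xA ≥ 1}` and its dual `max{⟨y,1⟩ : y ≥ 0, Ay ≤ α}` both have
integral optimum solutions (expressed via a pair of integral feasible solutions
with equal objective values, which are then optimal by LP duality). -/
def HasMFMC (C : Clutter n) : Prop :=
  ∀ α : Fin n → ℕ,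
    ∃ (x : Fin n → ℕ) (y : Finset (Fin n) → ℕ),
      (∀ e ∈ C.edges, 1 ≤ ∑ i ∈ e, x i) ∧
      (∀ e, e ∉ C.edges → y e = 0) ∧
      (∀ i : Fin n, ∑ e ∈ C.edges.filter (fun e => i ∈ e), y e ≤ α i) ∧
      (∑ i, α i * x i = ∑ e ∈ C.edges, y e)

/-- The incidence matrix of `C`, with columns indexed by the edges. -/
def inc (C : Clutter n) : Matrix (Fin n) {e // e ∈ C.edges} ℤ :=
  Matrix.of fun i e => if i ∈ e.1 then 1 else 0

end Clutter

/-- `Δ_r(A) = 1`: the gcd of all nonzero `r × r` subdeterminants of `A` is `1`,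
i.e. every common divisor of them is a unit. -/
def DeltaOne {m m' : Type*} [Fintype m] [Fintype m'] (A : Matrix m m' ℤ) (r : ℕ) : Prop :=
  ∀ k : ℤ, (∀ (f : Fin r → m) (g : Fin r → m'), Function.Injective f → Function.Injective g →
    (A.submatrix f g).det ≠ 0 → k ∣ (A.submatrix f g).det) → IsUnit k


/-- The pair `X_i = {x_{2i-1}, x_{2i}}` (with `0`-based indexing: `{x_{2i}, x_{2i+1}}`). -/
def pairCover (d : ℕ) (i : Fin d) : Finset (Fin (2 * d)) :=
  {⟨2 * i.1, by have h := i.2; omega⟩, ⟨2 * i.1 + 1, by have h := i.2; omega⟩}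

def vtx (d : ℕ) (i : Fin d) (b : Bool) : Fin (2 * d) :=
  ⟨2 * i.1 + (if b then 1 else 0), by have := i.2; cases b <;> simp <;> omega⟩
lemma vtx_inj {d : ℕ} {i j : Fin d} {b c : Bool} :
    vtx d i b = vtx d j c ↔ i = j ∧ b = c := by
  simp only [vtx, Fin.ext_iff]
  cases b <;> cases c <;> simp <;> omega
lemma vtx_surj {d : ℕ} (v : Fin (2 * d)) : ∃ i b, v = vtx d i b := by
  have hv := v.2
  by_cases h : v.1 % 2 = 1
  · exact ⟨⟨v.1 / 2, by omega⟩, true, by apply Fin.ext; simp [vtx]; omega⟩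
  · exact ⟨⟨v.1 / 2, by omega⟩, false, by apply Fin.ext; simp [vtx]; omega⟩
lemma pairCover_eq {d : ℕ} (j : Fin d) :
    pairCover d j = {vtx d j false, vtx d j true} := by
  unfold pairCover vtx; congr 1
lemma mem_pairCover_iff {d : ℕ} {i j : Fin d} {b : Bool} :
    vtx d i b ∈ pairCover d j ↔ i = j := by
  rw [pairCover_eq]
  simp only [mem_insert, mem_singleton, vtx_inj]
  cases b <;> simp
lemma vtx_div {d : ℕ} (i : Fin d) (b : Bool) : (vtx d i b).1 / 2 = i.1 := by
  cases b <;> simp [vtx] <;> omega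
lemma pair_fiber_sum {d : ℕ} (S : Finset (Fin (2 * d))) :
    S.card = ∑ j : Fin d, (S ∩ pairCover d j).card := by
  rw [Finset.card_eq_sum_card_fiberwise
    (f := fun v : Fin (2*d) => (⟨v.1 / 2, by have := v.2; omega⟩ : Fin d))
    (t := univ) (fun v _ => mem_univ _)]
  apply Finset.sum_congr rfl
  intro j _
  congr 1
  ext v
  obtain ⟨i, b, rfl⟩ := vtx_surj v
  simp only [mem_filter, mem_inter, mem_pairCover_iff]
  constructor
  · rintro ⟨h1, h2⟩
    refine ⟨h1, ?_⟩
    have := congrArg Fin.val h2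
    simp [vtx_div] at this
    exact Fin.ext (by omega)
  · rintro ⟨h1, rfl⟩
    exact ⟨h1, Fin.ext (by simp [vtx_div])⟩
lemma one_of_card_one {d : ℕ} {S : Finset (Fin (2 * d))} {j : Fin d}
    (h : (S ∩ pairCover d j).card = 1) :
    (vtx d j false ∈ S ↔ vtx d j true ∉ S) := by
  have hne : vtx d j false ≠ vtx d j true := by simp [vtx_inj]
  constructor
  · intro hf ht
    have hsub : ({vtx d j false, vtx d j true} : Finset _) ⊆ S ∩ pairCover d j := by
      intro x hx
      simp only [mem_insert, mem_singleton] at hx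
      rcases hx with rfl | rfl <;>
        simp [mem_inter, pairCover_eq, hf, ht]
    have h2 := Finset.card_le_card hsub
    rw [h, Finset.card_insert_of_notMem (by simp [hne]), Finset.card_singleton] at h2
    omega
  · intro ht
    by_contra hf
    have : S ∩ pairCover d j = ∅ := by
      ext x
      simp only [mem_inter, pairCover_eq, mem_insert, mem_singleton, notMem_empty, iff_false,
        not_and]
      rintro hx (rfl | rfl) <;> contradiction
    rw [this] at h
    simp at h


noncomputable def col {n : ℕ} (e : Finset (Fin n)) : Fin n → ℚ := fun v => if v ∈ e then 1 else 0

noncomputable def uu (d : ℕ) (i : Fin d) : Fin (2 * d) → ℚ :=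
  fun v => if v = vtx d i false then 1 else if v = vtx d i true then -1 else 0

lemma uu_apply (d : ℕ) (i k : Fin d) (b : Bool) :
    uu d i (vtx d k b) = if k = i then (if b then -1 else 1) else 0 := by
  unfold uu
  by_cases h : k = i
  · subst h; cases b <;> simp [vtx_inj]
  · simp [vtx_inj, h]

lemma span_trick {M : Type*} [AddCommGroup M] [Module ℚ M] (V : Submodule ℚ M)
    {d : ℕ} (i0 : Fin d) (f : Fin d → M)
    (hf : ∀ k, f k - f i0 ∈ V) (w : Fin d → ℚ)
    (hv : (∑ k, w k • f k) ∈ V) (hc : (∑ k, w k) ≠ 0) (i : Fin d) : f i ∈ V := by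
  have h1 : (∑ k, w k • (f k - f i0)) ∈ V :=
    Submodule.sum_mem _ fun k _ => Submodule.smul_mem _ _ (hf k)
  have h2 : (∑ k, w k) • f i0 = (∑ k, w k • f k) - (∑ k, w k • (f k - f i0)) := by
    simp [smul_sub, Finset.sum_sub_distrib, Finset.sum_smul]
  have h3 : (∑ k, w k) • f i0 ∈ V := h2 ▸ sub_mem hv h1
  have h4 : f i0 ∈ V := by
    have h5 := Submodule.smul_mem V (∑ k, w k)⁻¹ h3
    rwa [inv_smul_smul₀ hc] at h5
  have h5 := V.add_mem (hf i) h4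
  rwa [sub_add_cancel] at h5


/-- Let `C` be a `d`-uniform clutter, `d ≥ 3`, on `2d` vertices whose
vertex set is partitioned into the pairs `X_i = {x_{2i-1}, x_{2i}}`, each a minimal vertex
cover of `C`. If `C` satisfies the König property and has a minimal vertex cover of size
`d`, then the incidence matrix of `C` has rank exactly `d + 1`. -/
theorem stmt15 {d : ℕ} (hd : 3 ≤ d) (C : Clutter (2 * d)) (hC : C.Uniform d)
    (hX : ∀ i : Fin d, C.IsMinCover (pairCover d i))
    (hkonig : C.HasKonig)
    (hcov : ∃ S : Finset (Fin (2 * d)), C.IsMinCover S ∧ S.card = d) :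
    (C.inc.map (Int.cast : ℤ → ℚ)).rank = d + 1 := by
  classical
  have i0 : Fin d := ⟨0, by omega⟩
  -- exactly one vertex per pair in each edge
  have hfib1 : ∀ e ∈ C.edges, ∀ j : Fin d, (e ∩ pairCover d j).card = 1 := by
    intro e he
    have hsum : ∑ j : Fin d, (e ∩ pairCover d j).card = ∑ j : Fin d, 1 := by
      rw [← pair_fiber_sum, hC e he, Finset.sum_const, card_univ, Fintype.card_fin, smul_eq_mul,
        mul_one]
    have hle : ∀ j ∈ (univ : Finset (Fin d)), 1 ≤ (e ∩ pairCover d j).card := by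
      intro j _
      exact Nat.one_le_iff_ne_zero.mpr (Finset.card_ne_zero_of_mem ((hX j).1 e he).choose_spec)
    intro j
    exact ((Finset.sum_eq_sum_iff_of_le hle).mp hsum.symm j (mem_univ j)).symm
  have hone : ∀ e ∈ C.edges, ∀ (k : Fin d) (b : Bool), (vtx d k b ∈ e ↔ vtx d k (!b) ∉ e) := by
    intro e he k b
    have h := one_of_card_one (hfib1 e he k)
    cases b
    · simpa using h
    · simp only [Bool.not_true]
      constructor
      · intro ht hf; exact (h.mp hf) ht
      · intro hf; by_contra ht; exact hf (h.mpr ht)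
  -- cover number = 2
  have hpcc : ∀ j : Fin d, (pairCover d j).card = 2 := by
    intro j
    rw [pairCover_eq, Finset.card_insert_of_notMem (by simp [vtx_inj]), Finset.card_singleton]
  have hmem2 : 2 ∈ {k | ∃ S : Finset (Fin (2*d)), C.IsCover S ∧ S.card = k} :=
    ⟨pairCover d i0, (hX i0).1, hpcc i0⟩
  have hlow : ∀ k ∈ {k | ∃ S : Finset (Fin (2*d)), C.IsCover S ∧ S.card = k}, 2 ≤ k := by
    rintro k ⟨T, hT, rfl⟩
    by_contra hk
    push_neg at hk
    interval_cases h : T.card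
    · rw [Finset.card_eq_zero] at h
      subst h
      have h0 := (hX i0).2 ∅ (empty_subset _) hT
      have h1 := hpcc i0
      rw [← h0] at h1
      simp at h1
    · obtain ⟨v, rfl⟩ := Finset.card_eq_one.mp h
      obtain ⟨j, b, rfl⟩ := vtx_surj v
      have hsub : {vtx d j b} ⊆ pairCover d j := by
        simp [Finset.singleton_subset_iff, mem_pairCover_iff]
      have heq := (hX j).2 _ hsub hT
      have := hpcc j
      rw [← heq] at this
      simp at this
  have hcn : C.coverNumber = 2 := by
    unfold Clutter.coverNumber
    exact le_antisymm (Nat.sInf_le hmem2) (hlow _ (Nat.sInf_mem ⟨2, hmem2⟩))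
  -- matching of size two
  have hmn : C.matchNumber = 2 := by rw [← hkonig, hcn]
  obtain ⟨A, B, hABne, hA, hB, hdisj⟩ :
      ∃ A B, A ≠ B ∧ A ∈ C.edges ∧ B ∈ C.edges ∧ Disjoint A B := by
    have hne : Set.Nonempty {k | ∃ M : Finset (Finset (Fin (2*d))), M ⊆ C.edges ∧
        (∀ e ∈ M, ∀ f ∈ M, e ≠ f → Disjoint e f) ∧ M.card = k} :=
      ⟨0, ∅, empty_subset _, by simp, rfl⟩
    have hbdd : BddAbove {k | ∃ M : Finset (Finset (Fin (2*d))), M ⊆ C.edges ∧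
        (∀ e ∈ M, ∀ f ∈ M, e ≠ f → Disjoint e f) ∧ M.card = k} := by
      refine ⟨C.edges.card, ?_⟩
      rintro k ⟨M, hM, -, rfl⟩
      exact Finset.card_le_card hM
    have h2 := Nat.sSup_mem hne hbdd
    rw [show sSup _ = C.matchNumber from rfl, hmn] at h2
    obtain ⟨M, hMsub, hMdisj, hMcard⟩ := h2
    obtain ⟨A, B, hABne, rfl⟩ := Finset.card_eq_two.mp hMcard
    exact ⟨A, B, hABne, hMsub (by simp), hMsub (by simp),
      hMdisj A (by simp) B (by simp) hABne⟩
  have hcomp : ∀ (k : Fin d) (b : Bool), (vtx d k b ∈ B ↔ vtx d k b ∉ A) := by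
    intro k b
    constructor
    · intro hb ha
      exact Finset.disjoint_left.mp hdisj ha hb
    · intro ha
      have h1 : vtx d k (!b) ∈ A := by
        have := hone A hA k (!b)
        simp only [Bool.not_not] at this
        exact this.mpr ha
      have h2 : vtx d k (!b) ∉ B := fun hb => Finset.disjoint_left.mp hdisj h1 hb
      have := hone B hB k b
      by_contra hb
      exact h2 ((hone B hB k (!b)).mpr (by simpa [Bool.not_not] using hb))
  -- the size-d minimal cover
  obtain ⟨S, hSmin, hScard⟩ := hcov
  have hSnotboth : ∀ j : Fin d, ¬(vtx d j false ∈ S ∧ vtx d j true ∈ S) := by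
    rintro j ⟨h1, h2⟩
    have hsub : pairCover d j ⊆ S := by
      rw [pairCover_eq]
      intro x hx
      simp only [mem_insert, mem_singleton] at hx
      rcases hx with rfl | rfl <;> assumption
    have heq := hSmin.2 _ hsub (hX j).1
    have := hpcc j
    rw [heq, hScard] at this
    omega
  have hSfib1 : ∀ j : Fin d, (S ∩ pairCover d j).card = 1 := by
    have hsum : ∑ j : Fin d, (S ∩ pairCover d j).card = ∑ j : Fin d, 1 := by
      rw [← pair_fiber_sum, hScard, Finset.sum_const, card_univ, Fintype.card_fin, smul_eq_mul,
        mul_one]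
    have hle : ∀ j ∈ (univ : Finset (Fin d)), (S ∩ pairCover d j).card ≤ 1 := by
      intro j _
      rw [Finset.card_le_one]
      intro a ha b hb
      rw [mem_inter, pairCover_eq] at ha hb
      have ha2 := ha.2; have hb2 := hb.2
      simp only [mem_insert, mem_singleton] at ha2 hb2
      rcases ha2 with rfl | rfl <;> rcases hb2 with rfl | rfl
      · rfl
      · exact absurd ⟨ha.1, hb.1⟩ (hSnotboth j)
      · exact absurd ⟨hb.1, ha.1⟩ (hSnotboth j)
      · rfl
    intro j
    exact (Finset.sum_eq_sum_iff_of_le hle).mp hsum j (mem_univ j)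
  set σ : Fin d → Bool := fun j => decide (vtx d j true ∈ S) with hσdef
  have hσS : ∀ j : Fin d, vtx d j (σ j) ∈ S ∧ vtx d j (!σ j) ∉ S := by
    intro j
    have h := one_of_card_one (hSfib1 j)
    by_cases ht : vtx d j true ∈ S
    · have hσj : σ j = true := by simp [hσdef, ht]
      rw [hσj]
      refine ⟨ht, ?_⟩
      simp only [Bool.not_true]
      intro hf
      exact (h.mp hf) ht
    · have hσj : σ j = false := by simp [hσdef, ht]
      rw [hσj]
      exact ⟨h.mpr ht, by simpa using ht⟩
  -- the special edges T i
  have hT : ∀ i : Fin d, ∃ t ∈ C.edges,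
      vtx d i (σ i) ∈ t ∧ ∀ k, k ≠ i → vtx d k (!σ k) ∈ t := by
    intro i
    have hxS : vtx d i (σ i) ∈ S := (hσS i).1
    have hnotcov : ¬ C.IsCover (S.erase (vtx d i (σ i))) := by
      intro hcv
      have heq := hSmin.2 _ (Finset.erase_subset _ _) hcv
      exact (Finset.erase_ne_self.mpr hxS) heq
    unfold Clutter.IsCover at hnotcov
    push_neg at hnotcov
    obtain ⟨t, ht, htempty⟩ := hnotcov
    have hmiss : ∀ y, y ∈ t → y ∉ S.erase (vtx d i (σ i)) := by
      intro y hy hy'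
      have : y ∈ t ∩ S.erase (vtx d i (σ i)) := Finset.mem_inter.mpr ⟨hy, hy'⟩
      rw [htempty] at this
      simp at this
    refine ⟨t, ht, ?_, ?_⟩
    · obtain ⟨y, hy⟩ := hSmin.1 t ht
      rw [Finset.mem_inter] at hy
      by_cases hyx : y = vtx d i (σ i)
      · rw [← hyx]; exact hy.1
      · exact absurd (Finset.mem_erase.mpr ⟨hyx, hy.2⟩) (hmiss y hy.1)
    · intro k hk
      have h1 : vtx d k (σ k) ∉ t := by
        intro hmem
        exact hmiss _ hmem (Finset.mem_erase.mpr ⟨by simp [vtx_inj, hk], (hσS k).1⟩)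
      have := hone t ht k (!σ k)
      simp only [Bool.not_not] at this
      exact this.mpr h1
  choose T hTmem hTσ hTk using hT
  -- linear algebra
  rw [Matrix.rank_eq_finrank_span_cols]
  have hMT : (C.inc.map (Int.cast : ℤ → ℚ)).transpose
      = (fun e : {e // e ∈ C.edges} => col e.1) := by
    funext e v
    by_cases h : v ∈ e.1 <;>
      simp [Matrix.transpose_apply, Matrix.map_apply, Clutter.inc, col, h]
  rw [Matrix.col, hMT]
  set V := Submodule.span ℚ (Set.range (fun e : {e // e ∈ C.edges} => col e.1)) with hV
  have hcolV : ∀ e, e ∈ C.edges → col e ∈ V :=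
    fun e he => Submodule.subset_span ⟨⟨e, he⟩, rfl⟩
  set sg : Finset (Fin (2*d)) → Fin d → ℚ :=
    fun e k => if vtx d k true ∈ e then 1 else 0 with hsg
  have hcolT : ∀ (e : Finset (Fin (2*d))) (k : Fin d),
      col e (vtx d k true) = sg e k := fun e k => rfl
  have hcolF : ∀ e ∈ C.edges, ∀ k : Fin d, col e (vtx d k false) = 1 - sg e k := by
    intro e he k
    by_cases h : vtx d k true ∈ e
    · have h2 : vtx d k false ∉ e := by
        intro hfm
        exact (hone e he k false).mp hfm (by simpa using h)
      simp [col, hsg, h, h2]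
    · have h2 : vtx d k false ∈ e := by
        have h3 := hone e he k false
        simp only [Bool.not_false] at h3
        exact h3.mpr h
      simp [col, hsg, h, h2]
  have hdec : ∀ e ∈ C.edges, ∀ e' ∈ C.edges,
      col e' - col e = ∑ k : Fin d, (sg e k - sg e' k) • uu d k := by
    intro e he e' he'
    funext v
    obtain ⟨i, b, rfl⟩ := vtx_surj v
    rw [Pi.sub_apply, Finset.sum_apply, Finset.sum_eq_single i]
    · rw [Pi.smul_apply, smul_eq_mul, uu_apply, if_pos rfl]
      cases b
      · rw [hcolF e he, hcolF e' he']
        simp only [Bool.false_eq_true, if_false]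
        ring
      · rw [hcolT, hcolT]
        norm_num
    · intro k _ hk
      rw [Pi.smul_apply, smul_eq_mul, uu_apply, if_neg (Ne.symm hk), mul_zero]
    · intro hne
      exact absurd (mem_univ i) hne
  -- sign data
  set sA : Fin d → Bool := fun k => decide (vtx d k true ∈ A) with hsA
  have hsgA : ∀ k, sg A k = if sA k then 1 else 0 := by
    intro k; by_cases h : vtx d k true ∈ A <;> simp [hsg, hsA, h]
  have hsgB : ∀ k, sg B k = 1 - sg A k := by
    intro k
    by_cases h : vtx d k true ∈ A
    · have h2 : vtx d k true ∉ B := fun hb => (hcomp k true).mp hb h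
      simp [hsg, h, h2]
    · have h2 : vtx d k true ∈ B := (hcomp k true).mpr h
      simp [hsg, h, h2]
  have hsgT : ∀ i k : Fin d, sg (T i) k
      = if k = i then (if σ k then 1 else 0) else (if σ k then 0 else 1) := by
    intro i k
    by_cases h : k = i
    · subst h
      cases hσk : σ k
      · have h1 : vtx d k false ∈ T k := by have h2 := hTσ k; rwa [hσk] at h2
        have h2 : vtx d k true ∉ T k := by
          have h3 := (hone _ (hTmem k) k false).mp h1
          simpa using h3
        simp [hsg, h2, hσk]
      · have h1 : vtx d k true ∈ T k := by have h2 := hTσ k; rwa [hσk] at h2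
        simp [hsg, h1, hσk]
    · cases hσk : σ k
      · have h1 : vtx d k true ∈ T i := by
          have h2 := hTk i k h
          rw [hσk] at h2
          simpa using h2
        simp [hsg, h, h1, hσk]
      · have h1 : vtx d k false ∈ T i := by
          have h2 := hTk i k h
          rw [hσk] at h2
          simpa using h2
        have h2 : vtx d k true ∉ T i := by
          have h3 := (hone _ (hTmem i) k false).mp h1
          simpa using h3
        simp [hsg, h, h2, hσk]
  set εq : Fin d → ℚ := fun k => if σ k then 1 else -1 with hεq
  set f : Fin d → (Fin (2*d) → ℚ) := fun k => εq k • uu d k with hf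
  have hfd : ∀ k, f k - f i0 ∈ V := by
    intro k
    by_cases hk : k = i0
    · subst hk; rw [sub_self]; exact V.zero_mem
    · have e1 : sg (T k) k - sg (T i0) k = εq k := by
        rw [hsgT k k, hsgT i0 k, if_pos rfl, if_neg hk]
        cases hσk : σ k <;> simp [hεq, hσk]
      have e2 : sg (T k) i0 - sg (T i0) i0 = -εq i0 := by
        rw [hsgT k i0, hsgT i0 i0, if_neg (Ne.symm hk), if_pos rfl]
        cases hσ0 : σ i0 <;> simp [hεq, hσ0]
      have hkey : f k - f i0 = col (T i0) - col (T k) := by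
        rw [hdec (T k) (hTmem k) (T i0) (hTmem i0)]
        rw [← Finset.sum_subset (Finset.subset_univ ({k, i0} : Finset (Fin d)))
          (by
            intro m _ hm
            simp only [mem_insert, mem_singleton, not_or] at hm
            rw [hsgT k m, hsgT i0 m, if_neg hm.1, if_neg hm.2, sub_self, zero_smul])]
        rw [Finset.sum_pair hk, e1, e2, hf]
        simp only [neg_smul]
        abel
      rw [hkey]
      exact sub_mem (hcolV _ (hTmem i0)) (hcolV _ (hTmem k))
  set w1 : Fin d → ℚ := fun k => if sA k = σ k then 1 else -1 with hw1
  set w2 : Fin d → ℚ := fun k =>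
    if k = i0 then (if sA i0 = σ i0 then 0 else -1)
    else (if sA k = σ k then 1 else 0) with hw2
  have hv1 : col B - col A = ∑ k, w1 k • f k := by
    rw [hdec A hA B hB]
    apply Finset.sum_congr rfl
    intro k _
    simp only [hf, hw1]
    rw [smul_smul]
    congr 1
    rw [hsgB k, hsgA k]
    cases hsk : sA k <;> cases hσk : σ k <;> simp [hεq, hsk, hσk] <;> norm_num
  have hv2 : col (T i0) - col A = ∑ k, w2 k • f k := by
    rw [hdec A hA (T i0) (hTmem i0)]
    apply Finset.sum_congr rfl
    intro k _
    simp only [hf, hw2]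
    rw [smul_smul]
    congr 1
    rw [hsgT i0 k, hsgA k]
    by_cases hk : k = i0
    · subst hk
      rw [if_pos rfl, if_pos rfl]
      cases hsk : sA k <;> cases hσk : σ k <;> simp [hεq, hsk, hσk] <;> norm_num
    · rw [if_neg hk, if_neg hk]
      cases hsk : sA k <;> cases hσk : σ k <;> simp [hεq, hsk, hσk] <;> norm_num
  set mq : ℚ := ∑ k, (if sA k = σ k then (1:ℚ) else 0) with hmqdef
  have hsum1 : ∑ k, w1 k = 2 * mq - d := by
    have hterm : ∀ k : Fin d, w1 k = 2 * (if sA k = σ k then (1:ℚ) else 0) - 1 := by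
      intro k; by_cases h : sA k = σ k <;> simp [hw1, h] <;> norm_num
    rw [Finset.sum_congr rfl (fun k _ => hterm k), Finset.sum_sub_distrib, ← Finset.mul_sum,
      Finset.sum_const, card_univ, Fintype.card_fin, nsmul_eq_mul, mul_one, ← hmqdef]
  have hsum2 : ∑ k, w2 k = mq - 1 := by
    have hs1 : ∑ k, w2 k
        = w2 i0 + ∑ k ∈ univ.erase i0, (if sA k = σ k then (1:ℚ) else 0) := by
      rw [← Finset.add_sum_erase _ w2 (mem_univ i0)]
      congr 1
      apply Finset.sum_congr rfl
      intro k hk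
      simp only [hw2, if_neg (Finset.mem_erase.mp hk).1]
    have hs2 : mq = (if sA i0 = σ i0 then (1:ℚ) else 0)
        + ∑ k ∈ univ.erase i0, (if sA k = σ k then (1:ℚ) else 0) := by
      rw [hmqdef, ← Finset.add_sum_erase _ _ (mem_univ i0)]
    rw [hs1, hs2]
    by_cases h : sA i0 = σ i0 <;> simp [hw2, h] <;> ring
  have hfV : ∀ i : Fin d, f i ∈ V := by
    intro i
    by_cases hm : mq = 1
    · refine span_trick V i0 f hfd w1 ?_ ?_ i
      · rw [← hv1]; exact sub_mem (hcolV B hB) (hcolV A hA)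
      · rw [hsum1, hm]
        intro hcon
        have h3 : (3:ℚ) ≤ (d:ℚ) := by exact_mod_cast hd
        linarith
    · refine span_trick V i0 f hfd w2 ?_ ?_ i
      · rw [← hv2]; exact sub_mem (hcolV _ (hTmem i0)) (hcolV A hA)
      · rw [hsum2]
        exact sub_ne_zero_of_ne hm
  have huuV : ∀ i : Fin d, uu d i ∈ V := by
    intro i
    have h1 : uu d i = εq i • f i := by
      simp only [hf]
      rw [smul_smul]
      have h2 : εq i * εq i = 1 := by cases h : σ i <;> simp [hεq, h]
      rw [h2, one_smul]
    rw [h1]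
    exact Submodule.smul_mem _ _ (hfV i)
  set g : Option (Fin d) → (Fin (2*d) → ℚ) := fun o => o.elim (col A) (uu d) with hg
  have hspan : V = Submodule.span ℚ (Set.range g) := by
    apply le_antisymm
    · rw [hV, Submodule.span_le]
      rintro x ⟨e, rfl⟩
      dsimp only
      have hx : col e.1 = col A + ∑ k, (sg A k - sg e.1 k) • uu d k := by
        rw [← hdec A hA e.1 e.2]
        abel
      rw [hx]
      exact Submodule.add_mem _ (Submodule.subset_span ⟨none, rfl⟩)
        (Submodule.sum_mem _ fun k _ =>
          Submodule.smul_mem _ _ (Submodule.subset_span ⟨some k, rfl⟩))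
    · rw [Submodule.span_le]
      rintro x ⟨o, rfl⟩
      cases o with
      | none => exact hcolV A hA
      | some i => exact huuV i
  have hgind : LinearIndependent ℚ g := by
    rw [Fintype.linearIndependent_iff]
    intro c hc
    have hev : ∀ v, c none * col A v + ∑ k : Fin d, c (some k) * uu d k v = 0 := by
      intro v
      have h2 := congrFun hc v
      rw [Finset.sum_apply] at h2
      rw [Fintype.sum_option (fun o => (c o • g o) v)] at h2
      simpa [hg] using h2
    have hsumc : ∀ (i : Fin d) (b : Bool),
        ∑ k : Fin d, c (some k) * uu d k (vtx d i b) = c (some i) * (if b then -1 else 1) := by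
      intro i b
      rw [Finset.sum_eq_single i]
      · rw [uu_apply, if_pos rfl]
      · intro k _ hk
        rw [uu_apply, if_neg (Ne.symm hk), mul_zero]
      · intro hne; exact absurd (mem_univ i) hne
    have hnone : c none = 0 := by
      have h1 := hev (vtx d i0 true)
      have h2 := hev (vtx d i0 false)
      rw [hsumc, hcolT] at h1
      rw [hsumc, hcolF A hA] at h2
      norm_num at h1 h2
      linear_combination h1 + h2
    intro o
    rcases o with _ | i
    · exact hnone
    · have h2 := hev (vtx d i false)
      rw [hsumc, hcolF A hA, hnone] at h2
      simpa using h2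
  rw [hspan, finrank_span_eq_card hgind]
  simp
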